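/- Let d, n ∈ ℕ with d ≥ 1, let λ > 0, let φ_1, …, φ_n ∈ ℝ^d, y_1, …, y_n ∈ ℝ, and w ∈ ℝ^d. Define Σ̂_t := λI_d + Σ_{s=1}^{t} φ_sφ_sᵀ for t = 0, …, n, Ŵ_t := Σ̂_t^{-1} Σ_{s=1}^{t} φ_s y_s (with Ŵ_0 = 0), Θ_t := (Ŵ_t − w)ᵀ Σ̂_t (Ŵ_t − w), and ε_t := y_t − φ_tᵀw. Then Θ_n ≤ λ‖w‖_2² + Σ_{t=1}^{n} [ 2 ε_t · φ_tᵀ(Ŵ_{t-1} − w) / (1 + φ_tᵀ Σ̂_{t-1}^{-1} φ_t) + ε_t² · φ_tᵀ Σ̂_{t-1}^{-1} φ_t / (1 + φ_tᵀ Σ̂_{t-1}^{-1} φ_t) ]. -/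

import Mathlib

open Matrix Finset


variable {d : ℕ}

lemma myVecMulVec_mulVec (u v x : Fin d → ℝ) :
    vecMulVec u v *ᵥ x = (v ⬝ᵥ x) • u := by
  ext i
  simp only [mulVec, dotProduct, vecMulVec_apply, Pi.smul_apply, smul_eq_mul,
    Finset.sum_mul]
  exact Finset.sum_congr rfl fun j _ => by ring

lemma myPosSemidef_vecMulVec (u : Fin d → ℝ) : (vecMulVec u u).PosSemidef := by
  refine .of_dotProduct_mulVec_nonneg ?_ ?_
  · ext i j
    simp [conjTranspose_apply, vecMulVec_apply, mul_comm]
  · intro x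
    have h : star x ⬝ᵥ vecMulVec u u *ᵥ x = (u ⬝ᵥ x) * (u ⬝ᵥ x) := by
      rw [myVecMulVec_mulVec]
      simp [dotProduct_smul, dotProduct_comm]
    rw [h]
    exact mul_self_nonneg _

lemma mySymm_dot {M : Matrix (Fin d) (Fin d) ℝ} (hM : Mᵀ = M) (u v : Fin d → ℝ) :
    (M *ᵥ u) ⬝ᵥ v = u ⬝ᵥ M *ᵥ v := by
  rw [dotProduct_mulVec, ← mulVec_transpose, hM]

lemma myStep (S : Matrix (Fin d) (Fin d) ℝ) (hS : S.PosDef)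
    (v Δ Δ' : Fin d → ℝ) (e : ℝ)
    (h : (S + vecMulVec v v) *ᵥ Δ' = S *ᵥ Δ + e • v) :
    Δ' ⬝ᵥ (S + vecMulVec v v) *ᵥ Δ'
      ≤ Δ ⬝ᵥ S *ᵥ Δ + (2 * e * (v ⬝ᵥ Δ) / (1 + v ⬝ᵥ S⁻¹ *ᵥ v)
          + e ^ 2 * (v ⬝ᵥ S⁻¹ *ᵥ v) / (1 + v ⬝ᵥ S⁻¹ *ᵥ v)) := by
  have hdet : IsUnit S.det := isUnit_iff_isUnit_det _ |>.1 hS.isUnit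
  have hSS : S * S⁻¹ = 1 := mul_nonsing_inv _ hdet
  have hSS' : S⁻¹ * S = 1 := nonsing_inv_mul _ hdet
  set a : ℝ := v ⬝ᵥ S⁻¹ *ᵥ v with ha_def
  have ha : 0 ≤ a := by
    have := hS.inv.posSemidef.dotProduct_mulVec_nonneg v
    simpa [ha_def] using this
  have hc : (0:ℝ) < 1 + a := by linarith
  set p : ℝ := v ⬝ᵥ Δ with hp_def
  set k : ℝ := (p + e * a) / (1 + a) with hk_def
  set u : Fin d → ℝ := Δ + (e - k) • (S⁻¹ *ᵥ v) with hu_def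
  have hinvsymm : (S⁻¹)ᵀ = S⁻¹ := by
    have := hS.inv.isHermitian
    rwa [Matrix.IsHermitian, conjTranspose_eq_transpose_of_trivial] at this
  have hSposdef' : (S + vecMulVec v v).PosDef :=
    hS.add_posSemidef (myPosSemidef_vecMulVec v)
  have hSinvv : S *ᵥ (S⁻¹ *ᵥ v) = v := by
    rw [mulVec_mulVec, hSS, one_mulVec]
  have hk : (e - k) + (p + (e - k) * a) = e := by
    rw [hk_def]; field_simp; ring
  have hu : (S + vecMulVec v v) *ᵥ u = S *ᵥ Δ + e • v := by
    have expand : (S + vecMulVec v v) *ᵥ u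
        = S *ᵥ Δ + ((e - k) + (p + (e - k) * a)) • v := by
      simp only [hu_def, add_mulVec, mulVec_add, mulVec_smul, myVecMulVec_mulVec,
        hSinvv, dotProduct_add, dotProduct_smul, smul_eq_mul, ← ha_def, ← hp_def]
      module
    rw [expand, hk]
  have hΔ'u : Δ' = u :=
    (mulVec_injective_iff_isUnit.mpr hSposdef'.isUnit) (h.trans hu.symm)
  have hdot1 : (S⁻¹ *ᵥ v) ⬝ᵥ (S *ᵥ Δ) = p := by
    rw [mySymm_dot hinvsymm, mulVec_mulVec, hSS', one_mulVec]
  have hdot2 : (S⁻¹ *ᵥ v) ⬝ᵥ v = a := by rw [dotProduct_comm]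
  have hval : Δ' ⬝ᵥ (S + vecMulVec v v) *ᵥ Δ'
      = Δ ⬝ᵥ S *ᵥ Δ + e * p + (e - k) * (p + e * a) := by
    rw [hΔ'u, hu, hu_def]
    simp only [add_dotProduct, smul_dotProduct, dotProduct_add, dotProduct_smul,
      smul_eq_mul, hdot1, hdot2]
    rw [show Δ ⬝ᵥ v = p from dotProduct_comm Δ v]
    ring
  rw [hval]
  have key : e * p + (e - k) * (p + e * a) ≤ 2 * e * p / (1 + a) + e ^ 2 * a / (1 + a) := by
    rw [hk_def]
    rw [← add_div, le_div_iff₀ hc]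
    field_simp
    nlinarith [sq_nonneg p, hc]
  linarith

/-- **Recursive error decomposition for online ridge regression.**
With `Σ̂_t = λI + Σ_{s<t} φ_s φ_sᵀ`, `Ŵ_t = Σ̂_t⁻¹ Σ_{s<t} y_s φ_s`,
`Θ_t = (Ŵ_t − w)ᵀ Σ̂_t (Ŵ_t − w)` and residuals `ε_t = y_t − φ_tᵀw`,
the weighted squared error `Θ_n` is bounded by `λ‖w‖²` plus a martingale part and a
self-normalized shift part.  (Indices `t = 0, …, n−1` play the role of the paper's
`t = 1, …, n`, so `Σ̂_t`, `Ŵ_t` here stand for the paper's `Σ̂_{t-1}`, `Ŵ_{t-1}`.) -/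
theorem online_ridge_decomposition (d n : ℕ) (hd : 1 ≤ d)
    (lam : ℝ) (hlam : 0 < lam)
    (φ : ℕ → Fin d → ℝ) (y : ℕ → ℝ) (w : Fin d → ℝ)
    (Shat : ℕ → Matrix (Fin d) (Fin d) ℝ)
    (hShat : ∀ t, Shat t = lam • (1 : Matrix (Fin d) (Fin d) ℝ)
        + ∑ s ∈ Finset.range t, vecMulVec (φ s) (φ s))
    (What : ℕ → Fin d → ℝ)
    (hWhat : ∀ t, What t = (Shat t)⁻¹ *ᵥ ∑ s ∈ Finset.range t, y s • φ s)
    (Θ : ℕ → ℝ)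
    (hΘ : ∀ t, Θ t = (What t - w) ⬝ᵥ Shat t *ᵥ (What t - w))
    (ε : ℕ → ℝ) (hε : ∀ t, ε t = y t - φ t ⬝ᵥ w) :
    Θ n ≤ lam * (w ⬝ᵥ w)
      + ∑ t ∈ Finset.range n,
          (2 * ε t * (φ t ⬝ᵥ (What t - w)) / (1 + φ t ⬝ᵥ (Shat t)⁻¹ *ᵥ φ t)
            + ε t ^ 2 * (φ t ⬝ᵥ (Shat t)⁻¹ *ᵥ φ t) / (1 + φ t ⬝ᵥ (Shat t)⁻¹ *ᵥ φ t)) := by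
  have hSpos : ∀ t, (Shat t).PosDef := by
    intro t
    rw [hShat]
    apply Matrix.PosDef.add_posSemidef
    · have h1 : lam • (1 : Matrix (Fin d) (Fin d) ℝ) = diagonal (fun _ => lam) := by
        ext i j
        by_cases h : i = j <;> simp [h, Matrix.one_apply, Matrix.diagonal_apply]
      rw [h1]
      exact Matrix.PosDef.diagonal fun _ => hlam
    · exact Finset.sum_induction _ _ (fun A B hA hB => hA.add hB)
        Matrix.PosSemidef.zero (fun i _ => myPosSemidef_vecMulVec _)
  have hSmul : ∀ t (x : Fin d → ℝ), Shat t *ᵥ ((Shat t)⁻¹ *ᵥ x) = x := by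
    intro t x
    rw [mulVec_mulVec, mul_nonsing_inv _ (isUnit_iff_isUnit_det _ |>.1 (hSpos t).isUnit),
      one_mulVec]
  have hS_succ : ∀ t, Shat (t + 1) = Shat t + vecMulVec (φ t) (φ t) := by
    intro t
    rw [hShat, hShat, Finset.sum_range_succ, add_assoc]
  have hrec : ∀ t, (Shat t + vecMulVec (φ t) (φ t)) *ᵥ (What (t + 1) - w)
      = Shat t *ᵥ (What t - w) + ε t • φ t := by
    intro t
    rw [← hS_succ, mulVec_sub, mulVec_sub, hWhat (t + 1), hWhat t, hSmul, hSmul,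
      Finset.sum_range_succ, hS_succ, add_mulVec, myVecMulVec_mulVec, hε, sub_smul]
    module
  have hstep : ∀ t, Θ (t + 1) ≤ Θ t
      + (2 * ε t * (φ t ⬝ᵥ (What t - w)) / (1 + φ t ⬝ᵥ (Shat t)⁻¹ *ᵥ φ t)
        + ε t ^ 2 * (φ t ⬝ᵥ (Shat t)⁻¹ *ᵥ φ t) / (1 + φ t ⬝ᵥ (Shat t)⁻¹ *ᵥ φ t)) := by
    intro t
    have h := myStep (Shat t) (hSpos t) (φ t) (What t - w) (What (t + 1) - w) (ε t) (hrec t)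
    rw [hΘ (t + 1), hΘ t, hS_succ t]
    linarith
  have hbase : Θ 0 = lam * (w ⬝ᵥ w) := by
    rw [hΘ 0, hWhat 0, hShat 0]
    simp [smul_mulVec, one_mulVec, dotProduct_smul, smul_eq_mul]
  induction n with
  | zero => simp [hbase]
  | succ n ih =>
    rw [Finset.sum_range_succ]
    have := hstep n
    linarith
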